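/- Let f : 2^N → ℝ be monotone and submodular with f(∅) = 0 and f(N) > 0, let each element of N have a positive cost, and let γ > 1. Let fmin := min{f(u | S) : u ∈ N, S ⊆ N, f(u | S) > 0} and let c_opt := min{c(S*) : S* ⊆ N, f(S*) = f(N)}. Let π be a permutation of N that has no swaps and no γ-moves with respect to the weighted coverage mff_π. Then: (i) there is no element u ∈ N with 0 < mff_π(u) ≤ fmin / (γ · c_opt²); and (ii) the total cost of all elements u with mff_π(u) ≥ f(N)² / (fmin · c_opt²) is at most √γ · c_opt. -/

import Mathlib

open Finset

/-- The marginal value `f(A | C) := f(A ∪ C) - f(C)` of a set function. -/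
def margS {V : Type*} [DecidableEq V] (f : Finset V → ℝ) (A C : Finset V) : ℝ :=
  f (A ∪ C) - f C

/-- The marginal value `f(u | C) := f({u} ∪ C) - f C`. -/
def marg {V : Type*} [DecidableEq V] (f : Finset V → ℝ) (u : V) (C : Finset V) : ℝ :=
  f (insert u C) - f C

/-- The conditional mutual coverage `I_f(A; B | C) := f(A|C) + f(B|C) - f(A ∪ B | C)`. -/
def mutcov {V : Type*} [DecidableEq V] (f : Finset V → ℝ) (A B C : Finset V) : ℝ :=
  margS f A C + margS f B C - margS f (A ∪ B) C

/-- The prefix `π_{1:i}` of a permutation `π` (0-indexed: the set of the first `i` elements). -/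
def pref {V : Type*} [DecidableEq V] {n : ℕ} (π : Fin n → V) (i : ℕ) : Finset V :=
  (Finset.univ.filter fun j : Fin n => (j : ℕ) < i).image π

/-- The `(i,j)` mutual affinity of the pair of permutations `(α, β)`:
`I_{α,β}(α_i, β_j) := I_f(α_i; β_j | α_{1:i−1} ∪ β_{1:j−1})`. -/
def mfI {V : Type*} [DecidableEq V] {n : ℕ} (f : Finset V → ℝ) (a b : Fin n → V)
    (i j : Fin n) : ℝ :=
  mutcov f {a i} {b j} (pref a i ∪ pref b j)

/-- The weighted coverage `mff_π(π_i) := ∑_j I_{π,ψ}(π_i, ψ_j) / (c(π_i)·c(ψ_j))`. -/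
noncomputable def mffw {V : Type*} [Fintype V] [DecidableEq V] {n : ℕ} (f : Finset V → ℝ)
    (c : V → ℝ) (π ψ : Fin n → V) (i : Fin n) : ℝ :=
  ∑ j : Fin n, mfI f π ψ i j / (c (π i) * c (ψ j))

/-- The weighted coverage that the element `π_q` would have after being moved to position
`p`, i.e. `mff_{π′}(π′_p)` where `π′` is obtained from `π` by moving `π_q` to position `p`
(the prefix of `π′` at position `p` is `π_{1:p−1}`). -/
noncomputable def mffwMove {V : Type*} [Fintype V] [DecidableEq V] {n : ℕ}
    (f : Finset V → ℝ) (c : V → ℝ) (π ψ : Fin n → V) (p q : Fin n) : ℝ :=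
  ∑ j : Fin n, mutcov f {π q} {ψ j} (pref π p ∪ pref ψ j) / (c (π q) * c (ψ j))

section Aux
variable {V : Type*} [DecidableEq V] (f : Finset V → ℝ)

lemma margS_singleton (b : V) (C : Finset V) : margS f {b} C = marg f b C := by
  simp only [margS, marg, Finset.insert_eq]

lemma margS_nonneg (hmono : ∀ A B : Finset V, A ⊆ B → f A ≤ f B) (A C : Finset V) :
    0 ≤ margS f A C := by
  have := hmono C (A ∪ C) Finset.subset_union_right
  simp [margS]; linarith

lemma mutcov_nonneg (hmono : ∀ A B : Finset V, A ⊆ B → f A ≤ f B)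
    (hsub : ∀ A B : Finset V, f (A ∪ B) + f (A ∩ B) ≤ f A + f B)
    (A B C : Finset V) : 0 ≤ mutcov f A B C := by
  have h1 := hsub (A ∪ C) (B ∪ C)
  have h2 : (A ∪ C) ∪ (B ∪ C) = A ∪ B ∪ C := by
    ext x; simp [Finset.mem_union]; tauto
  have h3 : C ⊆ (A ∪ C) ∩ (B ∪ C) := by
    intro x hx; simp [Finset.mem_inter, Finset.mem_union]; tauto
  have h4 := hmono C _ h3
  rw [h2] at h1
  simp only [mutcov, margS]
  linarith

lemma mutcov_le_right (hmono : ∀ A B : Finset V, A ⊆ B → f A ≤ f B)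
    (A B C : Finset V) : mutcov f A B C ≤ margS f B C := by
  have : A ∪ C ⊆ A ∪ B ∪ C := by
    intro x hx; simp [Finset.mem_union] at hx ⊢; tauto
  have := hmono _ _ this
  simp only [mutcov, margS]; linarith

lemma mutcov_le_left (hmono : ∀ A B : Finset V, A ⊆ B → f A ≤ f B)
    (A B C : Finset V) : mutcov f A B C ≤ margS f A C := by
  have : B ∪ C ⊆ A ∪ B ∪ C := by
    intro x hx; simp [Finset.mem_union] at hx ⊢; tauto
  have := hmono _ _ this
  simp only [mutcov, margS]; linarith

lemma mutcov_self (A C : Finset V) : mutcov f A A C = margS f A C := by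
  simp [mutcov, Finset.union_self]

lemma mutcov_eq_sub (A B C : Finset V) :
    mutcov f A B C = margS f A C - margS f A (B ∪ C) := by
  have h : A ∪ (B ∪ C) = A ∪ B ∪ C := by rw [Finset.union_assoc]
  simp only [mutcov, margS, h]
  ring

lemma margS_zero_of_mem (b : V) (C : Finset V) (hb : b ∈ C) : margS f {b} C = 0 := by
  have : {b} ∪ C = C := by
    rw [Finset.union_eq_right]; simpa using hb
  simp [margS, this]

end Aux

section Pref
variable {V : Type*} [DecidableEq V] {n : ℕ}

lemma pref_zero (a : Fin n → V) : pref a 0 = ∅ := by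
  simp [pref]

lemma mem_pref {a : Fin n → V} {i : ℕ} {v : V} :
    v ∈ pref a i ↔ ∃ j : Fin n, (j : ℕ) < i ∧ a j = v := by
  simp [pref]

lemma pref_succ (a : Fin n → V) (J : ℕ) (hJ : J < n) :
    pref a (J + 1) = insert (a ⟨J, hJ⟩) (pref a J) := by
  ext v
  simp only [mem_pref, Finset.mem_insert, Nat.lt_succ_iff_lt_or_eq]
  constructor
  · rintro ⟨l, hl | hl, rfl⟩
    · exact Or.inr ⟨l, hl, rfl⟩
    · left; congr 1; exact Fin.ext hl
  · rintro (rfl | ⟨l, hl, rfl⟩)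
    · exact ⟨⟨J, hJ⟩, Or.inr rfl, rfl⟩
    · exact ⟨l, Or.inl hl, rfl⟩

lemma pref_mem_of_symm_lt (a : Fin n ≃ V) {v : V} {i : ℕ} (h : ((a.symm v : Fin n) : ℕ) < i) :
    v ∈ pref (⇑a) i :=
  mem_pref.2 ⟨a.symm v, h, a.apply_symm_apply v⟩

end Pref

section Telescope
variable {V : Type*} [DecidableEq V] {n : ℕ}

lemma filter_succ_eq (J : ℕ) (hJ : J < n) :
    (univ.filter fun j : Fin n => (j : ℕ) < J + 1)
      = insert (⟨J, hJ⟩ : Fin n) (univ.filter fun j : Fin n => (j : ℕ) < J) := by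
  ext j; simp [Fin.ext_iff]; omega

lemma sum_mutcov_filter (f : Finset V → ℝ) (ψ : Fin n → V) (b : V) (C : Finset V) :
    ∀ J : ℕ, J ≤ n →
      ∑ j ∈ univ.filter (fun j : Fin n => (j : ℕ) < J),
          mutcov f {b} {ψ j} (C ∪ pref ψ (j : ℕ))
        = margS f {b} C - margS f {b} (C ∪ pref ψ J) := by
  intro J
  induction J with
  | zero => intro _; simp [pref_zero]
  | succ J ih =>
    intro hJn
    have hJ : J < n := hJn
    rw [filter_succ_eq J hJ, Finset.sum_insert (by simp)]
    have hterm : mutcov f {b} {ψ ⟨J, hJ⟩} (C ∪ pref ψ J)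
        = margS f {b} (C ∪ pref ψ J) - margS f {b} (C ∪ pref ψ (J + 1)) := by
      rw [mutcov_eq_sub]
      congr 2
      rw [pref_succ ψ J hJ]
      rw [← Finset.insert_eq, Finset.union_insert]
    rw [hterm, ih (le_of_lt hJn)]
    ring

lemma sum_mutcov_univ (f : Finset V → ℝ) (ψ : Fin n → V) (b : V) (C : Finset V) :
    ∑ j : Fin n, mutcov f {b} {ψ j} (C ∪ pref ψ (j : ℕ))
      = margS f {b} C - margS f {b} (C ∪ pref ψ n) := by
  rw [← sum_mutcov_filter f ψ b C n le_rfl]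
  congr 1
  rw [Finset.filter_true_of_mem]
  exact fun j _ => j.isLt

lemma sum_margS_filter (f : Finset V → ℝ) (π : Fin n → V) :
    ∀ J : ℕ, J ≤ n →
      ∑ j ∈ univ.filter (fun j : Fin n => (j : ℕ) < J),
          margS f {π j} (pref π (j : ℕ))
        = f (pref π J) - f (pref π 0) := by
  intro J
  induction J with
  | zero => intro _; simp
  | succ J ih =>
    intro hJn
    have hJ : J < n := hJn
    rw [filter_succ_eq J hJ, Finset.sum_insert (by simp)]
    have hterm : margS f {π ⟨J, hJ⟩} (pref π J)
        = f (pref π (J + 1)) - f (pref π J) := by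
      rw [pref_succ π J hJ]
      simp only [margS, Finset.insert_eq]
    rw [hterm, ih (le_of_lt hJn)]
    ring

lemma pref_top (a : Fin n ≃ V) [Fintype V] : pref (⇑a) n = univ := by
  ext v
  simp only [Finset.mem_univ, iff_true]
  exact pref_mem_of_symm_lt a (a.symm v).isLt

lemma sum_margS_univ (f : Finset V → ℝ) [Fintype V] (π : Fin n ≃ V) :
    ∑ j : Fin n, margS f {π j} (pref (⇑π) (j : ℕ)) = f univ - f ∅ := by
  have := sum_margS_filter f (⇑π) n le_rfl
  rw [Finset.filter_true_of_mem (fun j _ => j.isLt)] at this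
  rw [this, pref_top, pref_zero]

end Telescope

section WLB
variable {V : Type*} [DecidableEq V] {n : ℕ}

lemma marg_mono_set (f : Finset V → ℝ)
    (hmono : ∀ A B : Finset V, A ⊆ B → f A ≤ f B)
    (hsub : ∀ A B : Finset V, f (A ∪ B) + f (A ∩ B) ≤ f A + f B)
    (a : V) {C D : Finset V} (hCD : C ⊆ D) : marg f a D ≤ marg f a C := by
  by_cases ha : a ∈ D
  · have h1 : marg f a D = 0 := by simp [marg, Finset.insert_eq_self.2 ha]
    have h2 : 0 ≤ marg f a C := by
      rw [← margS_singleton]; exact margS_nonneg f hmono _ _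
    linarith
  · have h1 := hsub (insert a C) D
    have h2 : insert a C ∪ D = insert a D := by
      ext x; simp only [Finset.mem_union, Finset.mem_insert]
      constructor
      · rintro (⟨rfl | hx⟩ | hx)
        · exact Or.inl rfl
        · exact Or.inr (hCD hx)
        · exact Or.inr hx
      · rintro (rfl | hx)
        · exact Or.inl (Or.inl rfl)
        · exact Or.inr hx
    have h3 : insert a C ∩ D = C := by
      ext x; simp only [Finset.mem_inter, Finset.mem_insert]
      constructor
      · rintro ⟨rfl | hx, hxD⟩
        · exact absurd hxD ha
        · exact hx
      · exact fun hx => ⟨Or.inr hx, hCD hx⟩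
    rw [h2, h3] at h1
    simp only [marg]; linarith

lemma margS_le_sum_marg (f : Finset V → ℝ)
    (hmono : ∀ A B : Finset V, A ⊆ B → f A ≤ f B)
    (hsub : ∀ A B : Finset V, f (A ∪ B) + f (A ∩ B) ≤ f A + f B)
    (S C : Finset V) : margS f S C ≤ ∑ u ∈ S, marg f u C := by
  induction S using Finset.induction_on with
  | empty => simp [margS]
  | insert _ _ ha =>
    rename_i a S ih
    rw [Finset.sum_insert ha]
    have hsplit : margS f (insert a S) C = marg f a (S ∪ C) + margS f S C := by
      simp only [margS, marg, Finset.insert_union]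
      ring
    have := marg_mono_set f hmono hsub a (Finset.subset_union_right : C ⊆ S ∪ C)
    linarith

lemma weighted_lb (f : Finset V → ℝ)
    (hmono : ∀ A B : Finset V, A ⊆ B → f A ≤ f B)
    (hsub : ∀ A B : Finset V, f (A ∪ B) + f (A ∩ B) ≤ f A + f B)
    (c : V → ℝ) (hc : ∀ u : V, 0 < c u) (ψ : Fin n → V) (b : V) (C : Finset V)
    (copt : ℝ) (hcopt : 0 < copt) (t : Fin n)
    (hcost : ∀ j : Fin n, j ≤ t → c (ψ j) ≤ copt)
    (hcov : margS f {b} (C ∪ pref ψ ((t : ℕ) + 1)) = 0) :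
    margS f {b} C / (c b * copt)
      ≤ ∑ j : Fin n, mutcov f {b} {ψ j} (C ∪ pref ψ (j : ℕ)) / (c b * c (ψ j)) := by
  have hsum := sum_mutcov_filter f ψ b C ((t : ℕ) + 1) t.isLt
  rw [hcov, sub_zero] at hsum
  have step1 : ∑ j ∈ univ.filter (fun j : Fin n => (j : ℕ) < (t : ℕ) + 1),
      mutcov f {b} {ψ j} (C ∪ pref ψ (j : ℕ)) / (c b * copt)
      ≤ ∑ j ∈ univ.filter (fun j : Fin n => (j : ℕ) < (t : ℕ) + 1),
      mutcov f {b} {ψ j} (C ∪ pref ψ (j : ℕ)) / (c b * c (ψ j)) := by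
    apply Finset.sum_le_sum
    intro j hj
    have hjt : j ≤ t := by
      simp only [Finset.mem_filter] at hj
      exact Fin.le_def.2 (Nat.lt_succ_iff.1 hj.2)
    have hnum := mutcov_nonneg f hmono hsub {b} {ψ j} (C ∪ pref ψ (j : ℕ))
    have h1 : 0 < c b * c (ψ j) := mul_pos (hc b) (hc (ψ j))
    have h2 : c b * c (ψ j) ≤ c b * copt :=
      mul_le_mul_of_nonneg_left (hcost j hjt) (hc b).le
    exact div_le_div_of_nonneg_left hnum h1 h2
  have step0 : ∑ j ∈ univ.filter (fun j : Fin n => (j : ℕ) < (t : ℕ) + 1),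
      mutcov f {b} {ψ j} (C ∪ pref ψ (j : ℕ)) / (c b * copt)
      = margS f {b} C / (c b * copt) := by
    rw [← Finset.sum_div, hsum]
  have step2 : ∑ j ∈ univ.filter (fun j : Fin n => (j : ℕ) < (t : ℕ) + 1),
      mutcov f {b} {ψ j} (C ∪ pref ψ (j : ℕ)) / (c b * c (ψ j))
      ≤ ∑ j : Fin n, mutcov f {b} {ψ j} (C ∪ pref ψ (j : ℕ)) / (c b * c (ψ j)) := by
    apply Finset.sum_le_sum_of_subset_of_nonneg (Finset.filter_subset _ _)
    intro j _ _
    exact div_nonneg (mutcov_nonneg f hmono hsub _ _ _) (mul_pos (hc b) (hc (ψ j))).le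
  calc margS f {b} C / (c b * copt) = _ := step0.symm
    _ ≤ _ := step1
    _ ≤ _ := step2

end WLB

/-- Extreme values lemma: if `π` has no swaps and no `γ`-moves with respect to the weighted
coverage, then (i) no element has weighted coverage in `(0, fmin/(γ·c_opt²)]`, and (ii) the
total cost of the elements of weighted coverage at least `f(N)²/(fmin·c_opt²)` is at most
`√γ · c_opt`. -/
theorem extreme_values_lemma {V : Type*} [Fintype V] [DecidableEq V]
    (f : Finset V → ℝ)
    (hmono : ∀ A B : Finset V, A ⊆ B → f A ≤ f B)
    (hsub : ∀ A B : Finset V, f (A ∪ B) + f (A ∩ B) ≤ f A + f B)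
    (hf0 : f ∅ = 0) (hfN : 0 < f Finset.univ)
    (c : V → ℝ) (hc : ∀ u : V, 0 < c u)
    (γ : ℝ) (hγ : 1 < γ)
    (fmin : ℝ)
    (hfmin_le : ∀ (u : V) (S : Finset V), 0 < marg f u S → fmin ≤ marg f u S)
    (hfmin_mem : ∃ (u : V) (S : Finset V), 0 < marg f u S ∧ marg f u S = fmin)
    (copt : ℝ)
    (hcopt_le : ∀ Sstar : Finset V, f Sstar = f Finset.univ → copt ≤ ∑ u ∈ Sstar, c u)
    (hcopt_mem : ∃ Sstar : Finset V, f Sstar = f Finset.univ ∧ ∑ u ∈ Sstar, c u = copt)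
    (π ψ : Fin (Fintype.card V) ≃ V)
    (hψ : ∀ j j' : Fin (Fintype.card V), j ≤ j' → c (ψ j) ≤ c (ψ j'))
    (hNoSwaps : ∀ i j : Fin (Fintype.card V), i ≤ j → mffw f c π ψ j ≤ mffw f c π ψ i)
    (hNoMoves : ∀ p q : Fin (Fintype.card V), p < q →
      ∃ i : Fin (Fintype.card V), p ≤ i ∧ i < q ∧
        mffwMove f c π ψ p q < γ * mffw f c π ψ i) :
    (¬ ∃ i : Fin (Fintype.card V),
        0 < mffw f c π ψ i ∧ mffw f c π ψ i ≤ fmin / (γ * copt ^ 2)) ∧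
    ∑ u ∈ (Finset.univ.filter fun i : Fin (Fintype.card V) =>
        f Finset.univ ^ 2 / (fmin * copt ^ 2) ≤ mffw f c π ψ i).image π, c u
      ≤ Real.sqrt γ * copt := by
  classical
  obtain ⟨Sstar, hSf, hSc⟩ := hcopt_mem
  obtain ⟨u₀, S₀, hm0, hm0eq⟩ := hfmin_mem
  have hfmin_pos : 0 < fmin := hm0eq ▸ hm0
  have hSne : Sstar.Nonempty := by
    rcases Finset.eq_empty_or_nonempty Sstar with rfl | h
    · rw [← hSf, hf0] at hfN; exact absurd hfN (lt_irrefl 0)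
    · exact h
  have hcopt_pos : 0 < copt := hSc ▸ Finset.sum_pos (fun u _ => hc u) hSne
  have hγpos : (0:ℝ) < γ := lt_trans one_pos hγ
  set tset : Finset (Fin (Fintype.card V)) := Sstar.image (fun u => ψ.symm u) with htset
  have htne : tset.Nonempty := hSne.image _
  set t : Fin (Fintype.card V) := tset.max' htne with ht
  have hcost : ∀ j : Fin (Fintype.card V), j ≤ t → c (ψ j) ≤ copt := by
    intro j hj
    obtain ⟨u, hu, hut⟩ := Finset.mem_image.1 (tset.max'_mem htne)
    have htu : c (ψ t) = c u := by rw [ht, ← hut, Equiv.apply_symm_apply]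
    calc c (ψ j) ≤ c (ψ t) := hψ j t hj
      _ = c u := htu
      _ ≤ ∑ v ∈ Sstar, c v := Finset.single_le_sum (fun v _ => (hc v).le) hu
      _ = copt := hSc
  have hSsub : Sstar ⊆ pref (⇑ψ) ((t : ℕ) + 1) := by
    intro u hu
    apply pref_mem_of_symm_lt
    have h1 : ψ.symm u ≤ t := Finset.le_max' tset _ (Finset.mem_image_of_mem _ hu)
    exact Nat.lt_succ_iff.2 h1
  have hfull : ∀ X : Finset V, Sstar ⊆ X → f X = f Finset.univ := fun X hX =>
    le_antisymm (hmono X Finset.univ (Finset.subset_univ X)) (hSf ▸ hmono Sstar X hX)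
  have hcov : ∀ (b : V) (C : Finset V),
      margS f {b} (C ∪ pref (⇑ψ) ((t : ℕ) + 1)) = 0 := by
    intro b C
    have h1 : f (C ∪ pref (⇑ψ) ((t : ℕ) + 1)) = f Finset.univ :=
      hfull _ (hSsub.trans Finset.subset_union_right)
    have h2 : f ({b} ∪ (C ∪ pref (⇑ψ) ((t : ℕ) + 1))) = f Finset.univ :=
      hfull _ ((hSsub.trans Finset.subset_union_right).trans Finset.subset_union_right)
    rw [margS, h1, h2, sub_self]
  have key_lb : ∀ (b : V) (C : Finset V),
      margS f {b} C / (c b * copt)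
        ≤ ∑ j : Fin (Fintype.card V), mutcov f {b} {ψ j} (C ∪ pref (⇑ψ) (j : ℕ)) / (c b * c (ψ j)) :=
    fun b C => weighted_lb f hmono hsub c hc (⇑ψ) b C copt hcopt_pos t hcost (hcov b C)
  have hmff_lb : ∀ i : Fin (Fintype.card V),
      margS f {⇑π i} (pref (⇑π) (i : ℕ)) / (c (π i) * copt) ≤ mffw f c (⇑π) (⇑ψ) i := by
    intro i
    simpa [mffw, mfI] using key_lb (π i) (pref (⇑π) (i : ℕ))
  have hmove_lb : ∀ p q : Fin (Fintype.card V),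
      margS f {⇑π q} (pref (⇑π) (p : ℕ)) / (c (π q) * copt)
        ≤ mffwMove f c (⇑π) (⇑ψ) p q := by
    intro p q
    simpa [mffwMove] using key_lb (π q) (pref (⇑π) (p : ℕ))
  have hmffw_nonneg : ∀ i : Fin (Fintype.card V), 0 ≤ mffw f c (⇑π) (⇑ψ) i := by
    intro i
    apply Finset.sum_nonneg
    intro j _
    exact div_nonneg (mutcov_nonneg f hmono hsub _ _ _) (mul_pos (hc _) (hc _)).le
  constructor
  · rintro ⟨i, hpos, hle⟩
    set M := mffw f c (⇑π) (⇑ψ) i with hM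
    set C := pref (⇑π) (i : ℕ) with hCdef
    have hri_ge : fmin ≤ marg f (⇑π i) C := by
      have hex : ∃ j : Fin (Fintype.card V), 0 < mfI f (⇑π) (⇑ψ) i j / (c (π i) * c (ψ j)) := by
        by_contra h
        push_neg at h
        have : M ≤ 0 := by
          rw [hM, mffw]
          exact Finset.sum_nonpos (fun j _ => h j)
        linarith
      obtain ⟨j, hj⟩ := hex
      have hden : 0 < c (⇑π i) * c (⇑ψ j) := mul_pos (hc _) (hc _)
      have hIpos : 0 < mfI f (⇑π) (⇑ψ) i j := by
        rcases div_pos_iff.1 hj with ⟨h1, _⟩ | ⟨_, h2⟩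
        · exact h1
        · linarith
      have h2 : mfI f (⇑π) (⇑ψ) i j ≤ margS f {⇑π i} (C ∪ pref (⇑ψ) (j : ℕ)) := by
        simp only [mfI]
        exact mutcov_le_left f hmono _ _ _
      have h3 : 0 < marg f (⇑π i) (C ∪ pref (⇑ψ) (j : ℕ)) := by
        rw [← margS_singleton]; linarith
      have h4 := hfmin_le _ _ h3
      have h5 : marg f (⇑π i) (C ∪ pref (⇑ψ) (j : ℕ)) ≤ marg f (⇑π i) C :=
        marg_mono_set f hmono hsub _ Finset.subset_union_left
      linarith
    have hu_bound : ∀ u ∈ Sstar, marg f u C < γ * M * (c u * copt) := by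
      intro u hu
      have hcu : 0 < c u * copt := mul_pos (hc u) hcopt_pos
      by_cases huC : u ∈ C
      · have h0 : marg f u C = 0 := by simp [marg, Finset.insert_eq_self.2 huC]
        rw [h0]
        exact mul_pos (mul_pos hγpos hpos) hcu
      · have hq : ¬ ((π.symm u : ℕ) < (i : ℕ)) := fun h => huC (pref_mem_of_symm_lt π h)
        have hle' : i ≤ π.symm u := le_of_not_gt (fun h => hq h)
        rcases eq_or_lt_of_le hle' with heq | hlt
        · have hu_eq : ⇑π i = u := by rw [heq, Equiv.apply_symm_apply]
          have h1 : marg f u C / (c u * copt) ≤ M := by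
            rw [← hu_eq, ← margS_singleton]
            simpa [hu_eq] using hmff_lb i
          rw [div_le_iff₀ hcu] at h1
          nlinarith [mul_pos hpos hcu]
        · obtain ⟨i', hi'1, hi'2, hi'3⟩ := hNoMoves i (π.symm u) hlt
          have h1 : marg f u C / (c u * copt) ≤ mffwMove f c (⇑π) (⇑ψ) i (π.symm u) := by
            have h := hmove_lb i (π.symm u)
            rw [Equiv.apply_symm_apply, margS_singleton] at h
            exact h
          have h2 : mffw f c (⇑π) (⇑ψ) i' ≤ M := hNoSwaps i i' hi'1
          have h3 : mffwMove f c (⇑π) (⇑ψ) i (π.symm u) < γ * M :=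
            lt_of_lt_of_le hi'3 (mul_le_mul_of_nonneg_left h2 hγpos.le)
          rw [div_le_iff₀ hcu] at h1
          nlinarith
    have hchain : fmin ≤ ∑ u ∈ Sstar, marg f u C := by
      have hA : marg f (⇑π i) C ≤ f Finset.univ - f C := by
        have := hmono (insert (⇑π i) C) Finset.univ (Finset.subset_univ _)
        simp only [marg]; linarith
      have hB : f Finset.univ - f C = margS f Sstar C := by
        rw [margS, hfull (Sstar ∪ C) Finset.subset_union_left]
      have hC2 := margS_le_sum_marg f hmono hsub Sstar C
      linarith
    have hsum_lt : ∑ u ∈ Sstar, marg f u C < ∑ u ∈ Sstar, γ * M * (c u * copt) :=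
      Finset.sum_lt_sum_of_nonempty hSne hu_bound
    have hsum_eq : ∑ u ∈ Sstar, γ * M * (c u * copt) = γ * M * copt ^ 2 := by
      have h1 : ∀ u ∈ Sstar, γ * M * (c u * copt) = (γ * M * copt) * c u := by
        intro u _; ring
      rw [Finset.sum_congr rfl h1, ← Finset.mul_sum, hSc]
      ring
    have hγc : 0 < γ * copt ^ 2 := by positivity
    rw [le_div_iff₀ hγc] at hle
    nlinarith
  · have hθpos : 0 < f Finset.univ ^ 2 / (fmin * copt ^ 2) := by positivity
    rw [Finset.sum_image (fun x _ y _ h => π.injective h)]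
    set θ := f Finset.univ ^ 2 / (fmin * copt ^ 2) with hθdef
    set T := Finset.univ.filter
      (fun i : Fin (Fintype.card V) => θ ≤ mffw f c (⇑π) (⇑ψ) i) with hT
    have key : ∀ i ∈ T, c (⇑π i) * f Finset.univ
        ≤ Real.sqrt γ * copt * margS f {⇑π i} (pref (⇑π) (i : ℕ)) := by
      intro i hiT
      have hθM : θ ≤ mffw f c (⇑π) (⇑ψ) i := (Finset.mem_filter.1 hiT).2
      have hMpos : 0 < mffw f c (⇑π) (⇑ψ) i := lt_of_lt_of_le hθpos hθM
      set M := mffw f c (⇑π) (⇑ψ) i with hM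
      set R := margS f {⇑π i} (pref (⇑π) (i : ℕ)) with hR
      have hRnn : 0 ≤ R := by rw [hR]; exact margS_nonneg f hmono _ _
      have hsfmin : 0 < Real.sqrt fmin := Real.sqrt_pos.2 hfmin_pos
      set K := Real.sqrt γ * Real.sqrt M / Real.sqrt fmin with hK
      have hterm : ∀ j : Fin (Fintype.card V),
          mfI f (⇑π) (⇑ψ) i j / c (ψ j) ≤ K * mfI f (⇑π) (⇑ψ) i j := by
        intro j
        have hI0 : 0 ≤ mfI f (⇑π) (⇑ψ) i j := by
          simp only [mfI]; exact mutcov_nonneg f hmono hsub _ _ _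
        rcases eq_or_lt_of_le hI0 with h0 | hIpos
        · rw [← h0]; simp
        · set m := margS f {⇑ψ j} (pref (⇑π) (i : ℕ) ∪ pref (⇑ψ) (j : ℕ)) with hm
          have hIm : mfI f (⇑π) (⇑ψ) i j ≤ m := by
            rw [hm]; simp only [mfI]; exact mutcov_le_right f hmono _ _ _
          have hmpos : 0 < m := lt_of_lt_of_le hIpos hIm
          have hfm : fmin ≤ m := by
            rw [hm, margS_singleton] at hmpos ⊢
            exact hfmin_le _ _ hmpos
          have hcj := hc (ψ j)
          have hkey2 : m ≤ γ * M * (c (ψ j) * c (ψ j)) := by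
            rcases lt_trichotomy (π.symm (ψ j)) i with hlt | heq | hgt
            · exfalso
              have hmem : (⇑ψ j) ∈ pref (⇑π) (i : ℕ) := pref_mem_of_symm_lt π hlt
              have hz : m = 0 := by
                rw [hm]; exact margS_zero_of_mem f _ _ (Finset.mem_union_left _ hmem)
              linarith
            · have hpe : ⇑π i = ⇑ψ j := by rw [← heq, Equiv.apply_symm_apply]
              have hsingle : mfI f (⇑π) (⇑ψ) i j / (c (⇑π i) * c (⇑ψ j)) ≤ M := by
                rw [hM, mffw]
                exact Finset.single_le_sum
                  (fun j' _ => div_nonneg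
                    (by simp only [mfI]; exact mutcov_nonneg f hmono hsub _ _ _)
                    (mul_pos (hc _) (hc _)).le)
                  (Finset.mem_univ j)
              have hIem : mfI f (⇑π) (⇑ψ) i j = m := by
                rw [hm]; simp only [mfI]; rw [hpe, mutcov_self]
              rw [hIem, hpe, div_le_iff₀ (mul_pos hcj hcj)] at hsingle
              nlinarith [mul_pos hcj hcj, hMpos]
            · obtain ⟨i', h1, h2, h3⟩ := hNoMoves i (π.symm (ψ j)) hgt
              have hqe : ⇑π (π.symm (⇑ψ j)) = ⇑ψ j := π.apply_symm_apply _
              have hsingle : m / (c (⇑ψ j) * c (⇑ψ j))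
                  ≤ mffwMove f c (⇑π) (⇑ψ) i (π.symm (ψ j)) := by
                rw [mffwMove]
                have hs := Finset.single_le_sum
                  (f := fun j' : Fin (Fintype.card V) =>
                    mutcov f {⇑π (π.symm (⇑ψ j))} {⇑ψ j'}
                        (pref (⇑π) (i : ℕ) ∪ pref (⇑ψ) (j' : ℕ))
                      / (c (⇑π (π.symm (⇑ψ j))) * c (⇑ψ j')))
                  (fun j' _ => div_nonneg (mutcov_nonneg f hmono hsub _ _ _)
                    (mul_pos (hc _) (hc _)).le)
                  (Finset.mem_univ j)
                have heq2 : mutcov f {⇑π (π.symm (⇑ψ j))} {⇑ψ j}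
                      (pref (⇑π) (i : ℕ) ∪ pref (⇑ψ) (j : ℕ))
                    / (c (⇑π (π.symm (⇑ψ j))) * c (⇑ψ j))
                    = m / (c (⇑ψ j) * c (⇑ψ j)) := by
                  rw [hqe, mutcov_self, ← hm]
                rw [← heq2]
                exact hs
              have h4 : mffw f c (⇑π) (⇑ψ) i' ≤ M := by rw [hM]; exact hNoSwaps i i' h1
              have h5 : m / (c (⇑ψ j) * c (⇑ψ j)) < γ * M :=
                lt_of_le_of_lt hsingle
                  (lt_of_lt_of_le h3 (mul_le_mul_of_nonneg_left h4 hγpos.le))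
              rw [div_lt_iff₀ (mul_pos hcj hcj)] at h5
              linarith
          have hsq : Real.sqrt fmin ≤ Real.sqrt γ * Real.sqrt M * c (ψ j) := by
            have h5 : fmin ≤ γ * M * (c (ψ j) * c (ψ j)) := le_trans hfm hkey2
            have h6 := Real.sqrt_le_sqrt h5
            rwa [Real.sqrt_mul (by positivity : (0:ℝ) ≤ γ * M),
              Real.sqrt_mul_self hcj.le, Real.sqrt_mul hγpos.le] at h6
          rw [div_le_iff₀ hcj]
          have hs1 : (1:ℝ) ≤ K * c (ψ j) := by
            rw [hK, div_mul_eq_mul_div, le_div_iff₀ hsfmin]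
            linarith
          nlinarith [hIpos.le, hs1]
      have hrow : c (⇑π i) * M ≤ K * R := by
        have e1 : c (⇑π i) * M
            = ∑ j : Fin (Fintype.card V), mfI f (⇑π) (⇑ψ) i j / c (ψ j) := by
          rw [hM, mffw, Finset.mul_sum]
          refine Finset.sum_congr rfl (fun j _ => ?_)
          have hne : c (⇑π i) ≠ 0 := (hc _).ne'
          rw [← mul_div_assoc, mul_div_mul_left _ _ hne]
        have e2 := Finset.sum_le_sum (fun j (_ : j ∈ Finset.univ) => hterm j)
        have e4 : ∑ j : Fin (Fintype.card V), mfI f (⇑π) (⇑ψ) i j ≤ R := by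
          have e5 := sum_mutcov_univ f (⇑ψ) (⇑π i) (pref (⇑π) (i : ℕ))
          have e6 := margS_nonneg f hmono {⇑π i}
            (pref (⇑π) (i : ℕ) ∪ pref (⇑ψ) (Fintype.card V))
          simp only [mfI]
          rw [e5]
          rw [hR]
          linarith
        have hK0 : 0 ≤ K := by
          rw [hK]
          exact div_nonneg (mul_nonneg (Real.sqrt_nonneg _) (Real.sqrt_nonneg _))
            (Real.sqrt_nonneg _)
        calc c (⇑π i) * M = _ := e1
          _ ≤ ∑ j : Fin (Fintype.card V), K * mfI f (⇑π) (⇑ψ) i j := e2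
          _ = K * ∑ j : Fin (Fintype.card V), mfI f (⇑π) (⇑ψ) i j := by
              rw [Finset.mul_sum]
          _ ≤ K * R := mul_le_mul_of_nonneg_left e4 hK0
      have hsM : Real.sqrt M * Real.sqrt M = M := Real.mul_self_sqrt hMpos.le
      have hsMpos : 0 < Real.sqrt M := Real.sqrt_pos.2 hMpos
      have hf2 : c (⇑π i) * M * Real.sqrt fmin ≤ Real.sqrt γ * Real.sqrt M * R := by
        have h7 := mul_le_mul_of_nonneg_right hrow hsfmin.le
        calc c (⇑π i) * M * Real.sqrt fmin ≤ K * R * Real.sqrt fmin := h7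
          _ = Real.sqrt γ * Real.sqrt M * R := by
            rw [hK, div_mul_eq_mul_div, div_mul_cancel₀ _ hsfmin.ne']
      have hf3 : c (⇑π i) * Real.sqrt M * Real.sqrt fmin ≤ Real.sqrt γ * R := by
        apply le_of_mul_le_mul_right _ hsMpos
        calc c (⇑π i) * Real.sqrt M * Real.sqrt fmin * Real.sqrt M
            = c (⇑π i) * (Real.sqrt M * Real.sqrt M) * Real.sqrt fmin := by ring
          _ = c (⇑π i) * M * Real.sqrt fmin := by rw [hsM]
          _ ≤ Real.sqrt γ * Real.sqrt M * R := hf2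
          _ = Real.sqrt γ * R * Real.sqrt M := by ring
      have hsθ : Real.sqrt θ * Real.sqrt fmin = f Finset.univ / copt := by
        rw [← Real.sqrt_mul hθpos.le]
        have hθf : θ * fmin = (f Finset.univ / copt) ^ 2 := by
          rw [hθdef]; field_simp
        rw [hθf, Real.sqrt_sq (by positivity)]
      have hsθM : Real.sqrt θ ≤ Real.sqrt M := Real.sqrt_le_sqrt hθM
      have hf4 : c (⇑π i) * (f Finset.univ / copt) ≤ Real.sqrt γ * R := by
        calc c (⇑π i) * (f Finset.univ / copt)
            = c (⇑π i) * (Real.sqrt θ * Real.sqrt fmin) := by rw [hsθ]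
          _ = c (⇑π i) * Real.sqrt θ * Real.sqrt fmin := by ring
          _ ≤ c (⇑π i) * Real.sqrt M * Real.sqrt fmin := by
              apply mul_le_mul_of_nonneg_right _ hsfmin.le
              exact mul_le_mul_of_nonneg_left hsθM (hc _).le
          _ ≤ Real.sqrt γ * R := hf3
      have h8 := mul_le_mul_of_nonneg_right hf4 hcopt_pos.le
      calc c (⇑π i) * f Finset.univ
          = c (⇑π i) * (f Finset.univ / copt) * copt := by
            rw [mul_assoc, div_mul_cancel₀ _ hcopt_pos.ne']
        _ ≤ Real.sqrt γ * R * copt := h8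
        _ = Real.sqrt γ * copt * R := by ring
    have h1 := Finset.sum_le_sum key
    have h2 : ∑ i ∈ T, margS f {⇑π i} (pref (⇑π) (i : ℕ)) ≤ f Finset.univ := by
      have h3 : ∑ i ∈ T, margS f {⇑π i} (pref (⇑π) (i : ℕ))
          ≤ ∑ i : Fin (Fintype.card V), margS f {⇑π i} (pref (⇑π) (i : ℕ)) :=
        Finset.sum_le_sum_of_subset_of_nonneg (Finset.filter_subset _ _)
          (fun j _ _ => margS_nonneg f hmono _ _)
      have h4 := sum_margS_univ f π
      rw [hf0] at h4
      linarith
    have h5 : (∑ i ∈ T, c (⇑π i)) * f Finset.univ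
        ≤ Real.sqrt γ * copt * f Finset.univ := by
      rw [Finset.sum_mul]
      refine le_trans h1 ?_
      have h6 : ∑ i ∈ T, Real.sqrt γ * copt * margS f {⇑π i} (pref (⇑π) (i : ℕ))
          = Real.sqrt γ * copt * ∑ i ∈ T, margS f {⇑π i} (pref (⇑π) (i : ℕ)) := by
        rw [Finset.mul_sum]
      rw [h6]
      exact mul_le_mul_of_nonneg_left h2
        (mul_nonneg (Real.sqrt_nonneg _) hcopt_pos.le)
    exact le_of_mul_le_mul_right h5 hfN
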